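/- (Deterministic form of the node-feature-unlearning guarantee, conditional on the concentration event.) Let 0 ≤ k ≤ F with F ≥ 1, let Π : ℝ^F → ℝ^F be the orthogonal projection zeroing the last k coordinates, and set z̃_i = Π z_i. Suppose: (a) w* satisfies ∇L(w*; z) = 0; (b) ℓ(·, y) is convex in its first argument; (c) ℓ'' is γ₂-Lipschitz in its first argument; (d) ‖z_i‖ ≤ 1 for all i (hence ‖z̃_i‖ ≤ 1); (e) ‖ℓ'(⟨z_i, w*⟩, y_i)·z_i‖ ≤ c for all i; (f) ‖ Σ_{i=1}^m ℓ'(⟨Π z_i, w*⟩, y_i) · Π z_i ‖ ≤ c₁ √((F − k) m / F); and (g) the map w ↦ ∇L(w; z̃) is continuously differentiable with derivative H_w(z̃). Then the Newton update w̃ = w* + H_{w*}(z̃)^{-1} Δ satisfies ‖∇L(w̃; z̃)‖ ≤ (γ₂ / (λ² m)) · ( 2 m c + c₁ √((F − k) m / F) )². -/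

import Mathlib

open scoped BigOperators InnerProductSpace

/-- The orthogonal projection of `ℝ^F` that zeroes out the last `k` coordinates. -/
noncomputable def zeroLastProj (F k : ℕ) (v : EuclideanSpace ℝ (Fin F)) :
    EuclideanSpace ℝ (Fin F) :=
  WithLp.toLp 2 (fun j : Fin F => if (j : ℕ) < F - k then v j else 0)

lemma mono_deriv_nonneg' {g g' : ℝ → ℝ} (hmono : Monotone g)
    (hd : ∀ a, HasDerivAt g (g' a) a) (a : ℝ) : 0 ≤ g' a := by
  have h := hd a
  rw [hasDerivAt_iff_tendsto_slope] at h
  refine le_of_tendsto_of_tendsto tendsto_const_nhds h ?_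
  filter_upwards [self_mem_nhdsWithin] with b hb
  rcases lt_or_gt_of_ne (show b ≠ a from hb) with h1 | h1
  · rw [slope_def_field, div_nonneg_iff]
    exact Or.inr ⟨sub_nonpos.2 (hmono h1.le), sub_nonpos.2 h1.le⟩
  · rw [slope_def_field]
    exact div_nonneg (sub_nonneg.2 (hmono h1.le)) (sub_nonneg.2 h1.le)

lemma d2_nonneg' {ℓ dℓ d2ℓ : ℝ → ℝ → ℝ}
    (hd1 : ∀ a y : ℝ, HasDerivAt (fun t => ℓ t y) (dℓ a y) a)
    (hd2 : ∀ a y : ℝ, HasDerivAt (fun t => dℓ t y) (d2ℓ a y) a)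
    (hconv : ∀ yv : ℝ, ConvexOn ℝ Set.univ fun a => ℓ a yv)
    (a yv : ℝ) : 0 ≤ d2ℓ a yv := by
  have hmono : Monotone (fun t => dℓ t yv) := by
    have h1 : MonotoneOn (deriv (fun t => ℓ t yv)) Set.univ :=
      (hconv yv).monotoneOn_deriv (fun x _ => (hd1 x yv).differentiableAt)
    have h2 : ∀ t, deriv (fun t => ℓ t yv) t = dℓ t yv := fun t => (hd1 t yv).deriv
    intro s t hst
    have := h1 (Set.mem_univ s) (Set.mem_univ t) hst
    rwa [h2, h2] at this
  exact mono_deriv_nonneg' hmono (fun x => hd2 x yv) a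

lemma zeroLastProj_norm_le' (F k : ℕ) (v : EuclideanSpace ℝ (Fin F)) :
    ‖zeroLastProj F k v‖ ≤ ‖v‖ := by
  rw [EuclideanSpace.norm_eq, EuclideanSpace.norm_eq]
  apply Real.sqrt_le_sqrt
  apply Finset.sum_le_sum
  intro j _
  by_cases h : (j : ℕ) < F - k
  · simp [zeroLastProj, h]
  · simp [zeroLastProj, h]
    positivity

set_option maxHeartbeats 1000000 in
set_option synthInstance.maxHeartbeats 400000 in
/-- deterministic form of the node-feature-unlearning guarantee,
conditional on the concentration event. -/
theorem node_feature_unlearning_guarantee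
    (F m k : ℕ) (hF : 0 < F) (hm : 0 < m) (hk : k ≤ F)
    (lam c c₁ γ₂ : ℝ) (hlam : 0 < lam) (hc : 0 < c) (hc₁ : 0 < c₁) (hγ₂ : 0 < γ₂)
    (ℓ dℓ d2ℓ : ℝ → ℝ → ℝ)
    (hd1 : ∀ a y : ℝ, HasDerivAt (fun t => ℓ t y) (dℓ a y) a)
    (hd2 : ∀ a y : ℝ, HasDerivAt (fun t => dℓ t y) (d2ℓ a y) a)
    -- (b) convexity of the loss in its first argument
    (hconv : ∀ yv : ℝ, ConvexOn ℝ Set.univ fun a => ℓ a yv)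
    -- (c) `ℓ''` is `γ₂`-Lipschitz in its first argument
    (hLip : ∀ a b yv : ℝ, |d2ℓ a yv - d2ℓ b yv| ≤ γ₂ * |a - b|)
    (z : Fin m → EuclideanSpace ℝ (Fin F)) (y : Fin m → ℝ)
    -- post-removal representations `z̃ᵢ = Π zᵢ`
    (ztil : Fin m → EuclideanSpace ℝ (Fin F))
    (hztil : ∀ i, ztil i = zeroLastProj F k (z i))
    -- (d) unit-norm representations
    (hznorm : ∀ i, ‖z i‖ ≤ 1)
    (wstar : EuclideanSpace ℝ (Fin F))
    -- (a) `w*` is a stationary point of the original risk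
    (hstat : ∑ i, dℓ ⟪z i, wstar⟫_ℝ (y i) • z i + (lam * m) • wstar = 0)
    -- (e) per-sample gradient bound
    (hgradb : ∀ i, ‖dℓ ⟪z i, wstar⟫_ℝ (y i) • z i‖ ≤ c)
    -- (f) the concentration event
    (hconc : ‖∑ i, dℓ ⟪zeroLastProj F k (z i), wstar⟫_ℝ (y i) • zeroLastProj F k (z i)‖ ≤
      c₁ * Real.sqrt (((F : ℝ) - k) * m / F))
    -- gradient and Hessian of the post-removal risk
    (G : EuclideanSpace ℝ (Fin F) → EuclideanSpace ℝ (Fin F))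
    (hG : G = fun w => ∑ i, dℓ ⟪ztil i, w⟫_ℝ (y i) • ztil i + (lam * m) • w)
    (H : EuclideanSpace ℝ (Fin F) →
      EuclideanSpace ℝ (Fin F) →L[ℝ] EuclideanSpace ℝ (Fin F))
    (hH : H = fun w => ∑ i, d2ℓ ⟪ztil i, w⟫_ℝ (y i) •
        ((innerSL ℝ (ztil i)).smulRight (ztil i)) +
        (lam * m) • ContinuousLinearMap.id ℝ (EuclideanSpace ℝ (Fin F)))
    -- (g) `w ↦ ∇L(w; z̃)` is continuously differentiable with derivative `H`
    (hGderiv : ∀ w, HasFDerivAt G (H w) w) (hHcont : Continuous H)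
    (Δ : EuclideanSpace ℝ (Fin F))
    (hΔ : Δ = ∑ i, (dℓ ⟪z i, wstar⟫_ℝ (y i) • z i - dℓ ⟪ztil i, wstar⟫_ℝ (y i) • ztil i)) :
    ∃ Hinv : EuclideanSpace ℝ (Fin F) →L[ℝ] EuclideanSpace ℝ (Fin F),
      (∀ x, Hinv (H wstar x) = x) ∧ (∀ x, H wstar (Hinv x) = x) ∧
      ‖G (wstar + Hinv Δ)‖ ≤ γ₂ / (lam ^ 2 * m) *
        (2 * m * c + c₁ * Real.sqrt (((F : ℝ) - k) * m / F)) ^ 2 := by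
  set s : ℝ := Real.sqrt (((F : ℝ) - k) * m / F) with hs_def
  have hs0 : 0 ≤ s := Real.sqrt_nonneg _
  have hmR : (0 : ℝ) < m := Nat.cast_pos.2 hm
  have hlm : (0 : ℝ) < lam * m := mul_pos hlam hmR
  have hd2nn : ∀ a yv, 0 ≤ d2ℓ a yv := d2_nonneg' hd1 hd2 hconv
  have hztilnorm : ∀ i, ‖ztil i‖ ≤ 1 := fun i => by
    rw [hztil i]; exact (zeroLastProj_norm_le' F k (z i)).trans (hznorm i)
  -- application formula for H
  have hHapp : ∀ w x : EuclideanSpace ℝ (Fin F), H w x =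
      (∑ i, d2ℓ ⟪ztil i, w⟫_ℝ (y i) • (⟪ztil i, x⟫_ℝ • ztil i)) + (lam * m) • x := by
    intro w x
    rw [hH]
    simp only [ContinuousLinearMap.add_apply, ContinuousLinearMap.sum_apply,
      ContinuousLinearMap.smul_apply, ContinuousLinearMap.smulRight_apply, innerSL_apply_apply,
      ContinuousLinearMap.id_apply]
  -- coercivity
  have hcoer : ∀ w x : EuclideanSpace ℝ (Fin F), lam * m * ‖x‖ ^ 2 ≤ ⟪H w x, x⟫_ℝ := by
    intro w x
    rw [hHapp, inner_add_left, sum_inner]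
    have h1 : (0:ℝ) ≤ ∑ i, ⟪d2ℓ ⟪ztil i, w⟫_ℝ (y i) • (⟪ztil i, x⟫_ℝ • ztil i), x⟫_ℝ := by
      apply Finset.sum_nonneg
      intro i _
      rw [real_inner_smul_left, real_inner_smul_left]
      exact mul_nonneg (hd2nn _ _) (mul_self_nonneg _)
    have h2 : ⟪(lam * (m:ℝ)) • x, x⟫_ℝ = lam * m * ‖x‖ ^ 2 := by
      rw [real_inner_smul_left, real_inner_self_eq_norm_sq]
    linarith
  -- injectivity, inverse
  have hinj : Function.Injective (H wstar) := by
    intro x₁ x₂ hx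
    have h0 : H wstar (x₁ - x₂) = 0 := by rw [map_sub, hx, sub_self]
    have h1 := hcoer wstar (x₁ - x₂)
    rw [h0, inner_zero_left] at h1
    have hnz : ‖x₁ - x₂‖ = 0 := by
      by_contra hne
      have hpos : 0 < ‖x₁ - x₂‖ := (norm_nonneg _).lt_of_ne (Ne.symm hne)
      nlinarith [mul_pos hlm (mul_pos hpos hpos)]
    exact sub_eq_zero.1 (norm_eq_zero.1 hnz)
  have hinj' : Function.Injective ((H wstar).toLinearMap) := hinj
  have hsurj : Function.Surjective ((H wstar).toLinearMap) :=
    (LinearMap.injective_iff_surjective).1 hinj'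
  set e : EuclideanSpace ℝ (Fin F) ≃ₗ[ℝ] EuclideanSpace ℝ (Fin F) := LinearEquiv.ofBijective ((H wstar).toLinearMap) ⟨hinj', hsurj⟩ with he
  refine ⟨LinearMap.toContinuousLinearMap (e.symm.toLinearMap), ?_, ?_, ?_⟩
  · intro x
    simp only [LinearMap.coe_toContinuousLinearMap', LinearEquiv.coe_coe]
    exact e.symm_apply_apply x
  · intro x
    simp only [LinearMap.coe_toContinuousLinearMap', LinearEquiv.coe_coe]
    exact e.apply_symm_apply x
  set Hinv : EuclideanSpace ℝ (Fin F) →L[ℝ] EuclideanSpace ℝ (Fin F) := LinearMap.toContinuousLinearMap (e.symm.toLinearMap) with hHinv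
  have hright : ∀ v : EuclideanSpace ℝ (Fin F), H wstar (Hinv v) = v := by
    intro v
    rw [hHinv]
    simp only [LinearMap.coe_toContinuousLinearMap', LinearEquiv.coe_coe]
    exact e.apply_symm_apply v
  -- norm bound on Hinv
  have hHinvb : ∀ v : EuclideanSpace ℝ (Fin F), lam * m * ‖Hinv v‖ ≤ ‖v‖ := by
    intro v
    have h1 := hcoer wstar (Hinv v)
    rw [hright v] at h1
    have h2 : ⟪v, Hinv v⟫_ℝ ≤ ‖v‖ * ‖Hinv v‖ := real_inner_le_norm v _
    rcases (norm_nonneg (Hinv v)).eq_or_lt with h3 | h3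
    · rw [← h3, mul_zero]; exact norm_nonneg v
    · have : lam * m * ‖Hinv v‖ * ‖Hinv v‖ ≤ ‖v‖ * ‖Hinv v‖ := by nlinarith
      exact le_of_mul_le_mul_right this h3
  -- bound on Δ
  have hΔb : ‖Δ‖ ≤ m * c + c₁ * s := by
    rw [hΔ, Finset.sum_sub_distrib]
    refine (norm_sub_le _ _).trans (add_le_add ?_ ?_)
    · refine (norm_sum_le _ _).trans ?_
      calc (∑ i, ‖dℓ ⟪z i, wstar⟫_ℝ (y i) • z i‖) ≤ ∑ _i : Fin m, c :=
            Finset.sum_le_sum fun i _ => hgradb i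
        _ = m * c := by simp [mul_comm]
    · simp only [hztil]; exact hconc
  -- G wstar = -Δ
  have hGapp : ∀ w, G w = ∑ i, dℓ ⟪ztil i, w⟫_ℝ (y i) • ztil i + (lam * m) • w :=
    fun w => by rw [hG]
  have hHw : ∀ w, H w = ∑ i, d2ℓ ⟪ztil i, w⟫_ℝ (y i) •
      ((innerSL ℝ (ztil i)).smulRight (ztil i)) +
      (lam * m) • ContinuousLinearMap.id ℝ (EuclideanSpace ℝ (Fin F)) :=
    fun w => by rw [hH]
  have hGw : G wstar = -Δ := by
    rw [hGapp, hΔ, Finset.sum_sub_distrib]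
    have h1 : (∑ i, dℓ ⟪ztil i, wstar⟫_ℝ (y i) • ztil i) + (lam * (m:ℝ)) • wstar =
        -((∑ i, dℓ ⟪z i, wstar⟫_ℝ (y i) • z i) - ∑ i, dℓ ⟪ztil i, wstar⟫_ℝ (y i) • ztil i)
        + ((∑ i, dℓ ⟪z i, wstar⟫_ℝ (y i) • z i) + (lam * (m:ℝ)) • wstar) := by abel
    rw [h1, hstat, add_zero]
  -- Lipschitz-type bound on H
  have hHdiff : ∀ x : EuclideanSpace ℝ (Fin F), ‖H x - H wstar‖ ≤ γ₂ * m * ‖x - wstar‖ := by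
    intro x
    have hsub : H x - H wstar = ∑ i, (d2ℓ ⟪ztil i, x⟫_ℝ (y i) - d2ℓ ⟪ztil i, wstar⟫_ℝ (y i)) •
        ((innerSL ℝ (ztil i)).smulRight (ztil i)) := by
      rw [hHw x, hHw wstar]
      simp only [sub_smul, Finset.sum_sub_distrib]
      abel
    rw [hsub]
    refine (norm_sum_le _ _).trans ?_
    have hterm : ∀ i : Fin m, ‖(d2ℓ ⟪ztil i, x⟫_ℝ (y i) - d2ℓ ⟪ztil i, wstar⟫_ℝ (y i)) •
        ((innerSL ℝ (ztil i)).smulRight (ztil i))‖ ≤ γ₂ * ‖x - wstar‖ := by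
      intro i
      refine (norm_smul_le (d2ℓ ⟪ztil i, x⟫_ℝ (y i) - d2ℓ ⟪ztil i, wstar⟫_ℝ (y i)) ((innerSL ℝ (ztil i)).smulRight (ztil i))).trans ?_
      have hR : ‖(innerSL ℝ (ztil i)).smulRight (ztil i)‖ ≤ 1 := by
        rw [ContinuousLinearMap.norm_smulRight_apply, innerSL_apply_norm]
        nlinarith [hztilnorm i, norm_nonneg (ztil i)]
      have h1 : |d2ℓ ⟪ztil i, x⟫_ℝ (y i) - d2ℓ ⟪ztil i, wstar⟫_ℝ (y i)| ≤
          γ₂ * |⟪ztil i, x⟫_ℝ - ⟪ztil i, wstar⟫_ℝ| := hLip _ _ _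
      have h2 : ⟪ztil i, x⟫_ℝ - ⟪ztil i, wstar⟫_ℝ = ⟪ztil i, x - wstar⟫_ℝ :=
        (inner_sub_right _ _ _).symm
      have h3 : |⟪ztil i, x - wstar⟫_ℝ| ≤ ‖ztil i‖ * ‖x - wstar‖ := abs_real_inner_le_norm _ _
      rw [h2] at h1
      have h4 : ‖ztil i‖ * ‖x - wstar‖ ≤ ‖x - wstar‖ := by
        nlinarith [hztilnorm i, norm_nonneg (x - wstar), norm_nonneg (ztil i)]
      rw [Real.norm_eq_abs]
      nlinarith [abs_nonneg (d2ℓ ⟪ztil i, x⟫_ℝ (y i) - d2ℓ ⟪ztil i, wstar⟫_ℝ (y i)),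
        norm_nonneg ((innerSL ℝ (ztil i)).smulRight (ztil i)), abs_nonneg (⟪ztil i, x - wstar⟫_ℝ)]
    calc (∑ i, ‖(d2ℓ ⟪ztil i, x⟫_ℝ (y i) - d2ℓ ⟪ztil i, wstar⟫_ℝ (y i)) •
          ((innerSL ℝ (ztil i)).smulRight (ztil i))‖)
        ≤ ∑ _i : Fin m, γ₂ * ‖x - wstar‖ := Finset.sum_le_sum fun i _ => hterm i
      _ = γ₂ * m * ‖x - wstar‖ := by simp; ring
  -- Newton step
  set u : EuclideanSpace ℝ (Fin F) := Hinv Δ with hu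
  set wt : EuclideanSpace ℝ (Fin F) := wstar + u with hwt
  have hwtsub : wt - wstar = u := by rw [hwt]; abel
  have hub : lam * m * ‖u‖ ≤ ‖Δ‖ := hHinvb Δ
  -- mean value on the segment
  have hseg : ∀ x ∈ segment ℝ wstar wt, ‖x - wstar‖ ≤ ‖u‖ := by
    intro x hx
    obtain ⟨a, b, ha, hb, hab, rfl⟩ := hx
    have hx1 : a • wstar + b • wt - wstar = b • u := by
      rw [hwt, smul_add, ← add_assoc, ← add_smul, hab, one_smul]; abel
    rw [hx1, norm_smul, Real.norm_eq_abs, abs_of_nonneg hb]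
    nlinarith [norm_nonneg u]
  have hmv : ‖(G wt - H wstar wt) - (G wstar - H wstar wstar)‖ ≤
      (γ₂ * m * ‖u‖) * ‖wt - wstar‖ := by
    apply Convex.norm_image_sub_le_of_norm_hasFDerivWithin_le
      (f' := fun x => H x - H wstar)
      (fun x _ => ((hGderiv x).sub ((H wstar).hasFDerivAt)).hasFDerivWithinAt)
      (fun x hx => (hHdiff x).trans (mul_le_mul_of_nonneg_left (hseg x hx) (by positivity)))
      (convex_segment _ _) (left_mem_segment _ _ _) (right_mem_segment _ _ _)
  have hGwt : (G wt - H wstar wt) - (G wstar - H wstar wstar) = G wt := by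
    have h1 : H wstar wt = H wstar wstar + H wstar u := by rw [hwt, map_add]
    rw [h1, hright, hGw]
    abel
  rw [hGwt, hwtsub] at hmv
  -- final arithmetic
  have hfin : ‖G wt‖ ≤ γ₂ / (lam ^ 2 * m) * (2 * m * c + c₁ * s) ^ 2 := by
    rw [div_mul_eq_mul_div, le_div_iff₀ (by positivity)]
    have hB : lam * m * ‖u‖ ≤ m * c + c₁ * s := hub.trans hΔb
    have hBnn : (0:ℝ) ≤ m * c + c₁ * s := le_trans (by positivity) hB
    have hsq : (lam * m * ‖u‖) ^ 2 ≤ (m * c + c₁ * s) ^ 2 := by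
      nlinarith [mul_nonneg hlm.le (norm_nonneg u)]
    have h5 : ‖G wt‖ * (lam ^ 2 * m) ≤ (γ₂ * m * ‖u‖ * ‖u‖) * (lam ^ 2 * m) :=
      mul_le_mul_of_nonneg_right hmv (by positivity)
    have h6 : (γ₂ * (m:ℝ) * ‖u‖ * ‖u‖) * (lam ^ 2 * m) = γ₂ * (lam * m * ‖u‖) ^ 2 := by ring
    have h7 : γ₂ * (lam * (m:ℝ) * ‖u‖) ^ 2 ≤ γ₂ * (m * c + c₁ * s) ^ 2 :=
      mul_le_mul_of_nonneg_left hsq hγ₂.le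
    have h8 : ((m:ℝ) * c + c₁ * s) ^ 2 ≤ (2 * m * c + c₁ * s) ^ 2 := by
      nlinarith [mul_nonneg hmR.le hc.le, mul_nonneg hc₁.le hs0]
    have h9 := mul_le_mul_of_nonneg_left h8 hγ₂.le
    linarith
  exact hfin
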